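/- In any target–context category (C,T,C₀,⪰), the lax context-reduction relation ⪰^cr is a preorder (reflexive and transitive) on every hom-set C(A,T). -/

import Mathlib

open CategoryTheory MonoidalCategory

universe w v u v' u'

/-- A gs-monoidal category: a symmetric monoidal category in which every object carries a
commutative comonoid structure (copy and discard), compatible with tensor products. -/
class GSCat (C : Type u) [Category.{v} C] [MonoidalCategory C] [SymmetricCategory C] where
  copy : ∀ A : C, A ⟶ A ⊗ A
  discard : ∀ A : C, A ⟶ 𝟙_ C
  copy_assoc : ∀ A : C, copy A ≫ (copy A ▷ A) ≫ (α_ A A A).hom = copy A ≫ (A ◁ copy A)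
  copy_comm : ∀ A : C, copy A ≫ (β_ A A).hom = copy A
  copy_counit_left : ∀ A : C, copy A ≫ (discard A ▷ A) ≫ (λ_ A).hom = 𝟙 A
  copy_counit_right : ∀ A : C, copy A ≫ (A ◁ discard A) ≫ (ρ_ A).hom = 𝟙 A
  copy_tensor : ∀ A X : C, copy (A ⊗ X) = (copy A ⊗ₘ copy X) ≫ tensorμ A A X X
  discard_tensor : ∀ A X : C, discard (A ⊗ X) = (discard A ⊗ₘ discard X) ≫ (λ_ (𝟙_ C)).hom
  discard_unit : discard (𝟙_ C) = 𝟙 (𝟙_ C)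

variable {C : Type u} [Category.{v} C] [MonoidalCategory C] [SymmetricCategory C] [GSCat C]

/-- The domain `dom(f) = ρ_A ∘ (id_A ⊗ (ε_X ∘ f)) ∘ Δ_A` of a morphism `f : A ⟶ X`. -/
def gsDom {A X : C} (f : A ⟶ X) : A ⟶ A :=
  GSCat.copy A ≫ (A ◁ (f ≫ GSCat.discard X)) ≫ (ρ_ A).hom

/-- A morphism is normalized if `f ∘ dom(f) = f`. -/
def GsNormalized {A X : C} (f : A ⟶ X) : Prop := gsDom f ≫ f = f

/-- A morphism is functional if `Δ_X ∘ f = (f ⊗ f) ∘ Δ_A`. -/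
def GsFunctional {A X : C} (f : A ⟶ X) : Prop :=
  f ≫ GSCat.copy X = GSCat.copy A ≫ (f ⊗ₘ f)

/-- A morphism is total if `ε_X ∘ f = ε_A`. -/
def GsTotal {A X : C} (f : A ⟶ X) : Prop := f ≫ GSCat.discard X = GSCat.discard A

/-- `f ⊒ g` : `f` agrees with `g` on the domain of `g`, i.e. `f ∘ dom(g) = g`. -/
def GsRestrict {A X : C} (f g : A ⟶ X) : Prop := gsDom g ≫ f = g

/-- A gs-monoidal category is normalized if all of its morphisms are normalized. -/
class GsNormalizedCat (C : Type u) [Category.{v} C] [MonoidalCategory C]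
    [SymmetricCategory C] [GSCat C] : Prop where
  norm : ∀ {A X : C} (f : A ⟶ X), GsNormalized f

/-- A target--context category: a (normalized) gs-monoidal category with distinguished
objects `T` (targets) and `C0` (contexts) together with an ambient preorder on each
hom-set into `T ⊗ C0`, containing the restriction order and preserved by precomposition. -/
structure TCC (C : Type u) [Category.{v} C] [MonoidalCategory C] [SymmetricCategory C]
    [GSCat C] (T C0 : C) where
  amb : ∀ {A : C}, (A ⟶ T ⊗ C0) → (A ⟶ T ⊗ C0) → Prop
  amb_refl : ∀ {A : C} (f : A ⟶ T ⊗ C0), amb f f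
  amb_trans : ∀ {A : C} {f g h : A ⟶ T ⊗ C0}, amb f g → amb g h → amb f h
  amb_of_restrict : ∀ {A : C} {f g : A ⟶ T ⊗ C0}, GsRestrict f g → amb f g
  amb_precomp : ∀ {A Z : C} {f g : A ⟶ T ⊗ C0} (h : Z ⟶ A), amb f g → amb (h ≫ f) (h ≫ g)

/-- `f` lax context-reduces to `g` : there is `f_C : A ⊗ C0 ⟶ C0` with
`(f ⊗ f_C) ∘ (Δ_A ⊗ id) ⪰ g ⊗ id`. -/
def LaxCtxRed {T C0 : C} (𝒯 : TCC C T C0) {A : C} (f g : A ⟶ T) : Prop :=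
  ∃ fC : A ⊗ C0 ⟶ C0,
    𝒯.amb ((GSCat.copy A ▷ C0) ≫ (α_ A A C0).hom ≫ (f ⊗ₘ fC)) (g ▷ C0)

section Aux

lemma gs_refl_eq {T C0 A : C} (f : A ⟶ T) :
    (GSCat.copy A ▷ C0) ≫ (α_ A A C0).hom ≫
      (f ⊗ₘ ((GSCat.discard A ▷ C0) ≫ (λ_ C0).hom)) = f ▷ C0 := by
  rw [tensorHom_def']
  simp only [MonoidalCategory.whiskerLeft_comp, Category.assoc]
  rw [← associator_naturality_middle_assoc, MonoidalCategory.triangle_assoc,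
    ← comp_whiskerRight_assoc, ← comp_whiskerRight_assoc, Category.assoc,
    GSCat.copy_counit_right, id_whiskerRight, Category.id_comp]

lemma gs_copy_slide {A C0 : C} (u : A ⊗ C0 ⟶ C0) :
    (GSCat.copy A ▷ C0) ≫ (α_ A A C0).hom ≫
      (A ◁ ((GSCat.copy A ▷ C0) ≫ (α_ A A C0).hom ≫ (A ◁ u))) =
    ((GSCat.copy A ▷ C0) ≫ (α_ A A C0).hom ≫ (A ◁ u)) ≫
      (GSCat.copy A ▷ C0) ≫ (α_ A A C0).hom := by
  simp only [MonoidalCategory.whiskerLeft_comp, Category.assoc]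
  rw [whisker_exchange_assoc, associator_naturality_right,
    ← associator_naturality_left_assoc, ← associator_naturality_middle_assoc,
    ← comp_whiskerRight_assoc, ← comp_whiskerRight_assoc, ← GSCat.copy_assoc,
    comp_whiskerRight, comp_whiskerRight, Category.assoc, Category.assoc,
    MonoidalCategory.pentagon_assoc]
  simp only [comp_whiskerRight, Category.assoc]

end Aux


/-- In any target--context category, the lax context-reduction relation is a
preorder (reflexive and transitive) on every hom-set `C(A, T)`. -/
theorem laxCtxRed_is_preorder [GsNormalizedCat C] {T C0 : C} (𝒯 : TCC C T C0) {A : C} :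
    (∀ f : A ⟶ T, LaxCtxRed 𝒯 f f) ∧
    (∀ f g h : A ⟶ T, LaxCtxRed 𝒯 f g → LaxCtxRed 𝒯 g h → LaxCtxRed 𝒯 f h) := by
  constructor
  · intro f
    exact ⟨(GSCat.discard A ▷ C0) ≫ (λ_ C0).hom, gs_refl_eq f ▸ 𝒯.amb_refl _⟩
  · rintro f g h ⟨fC, hf⟩ ⟨gC, hg⟩
    set e : A ⊗ C0 ⟶ A ⊗ C0 :=
      (GSCat.copy A ▷ C0) ≫ (α_ A A C0).hom ≫ (A ◁ gC) with he
    refine ⟨e ≫ fC, ?_⟩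
    have h1 := 𝒯.amb_precomp e hf
    have eq1 : e ≫ (g ▷ C0) =
        (GSCat.copy A ▷ C0) ≫ (α_ A A C0).hom ≫ (g ⊗ₘ gC) := by
      rw [he]
      simp only [Category.assoc, ← tensorHom_def'_assoc, ← tensorHom_def']
    have eq2 : e ≫ ((GSCat.copy A ▷ C0) ≫ (α_ A A C0).hom ≫ (f ⊗ₘ fC)) =
        (GSCat.copy A ▷ C0) ≫ (α_ A A C0).hom ≫ (f ⊗ₘ (e ≫ fC)) := by
      rw [tensorHom_def' f fC, tensorHom_def' f (e ≫ fC),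
        MonoidalCategory.whiskerLeft_comp]
      have key := gs_copy_slide (A := A) (C0 := C0) gC
      rw [he]
      simp only [Category.assoc] at key ⊢
      rw [reassoc_of% key]
    rw [eq1, eq2] at h1
    exact 𝒯.amb_trans h1 hg
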